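/- Fix a nonnegative integer n and real x. Suppose z_1(x),…,z_n(x) are differentiable real functions on an open interval that are pairwise distinct with pairwise distinct squares, avoid ±1,…,±n, and satisfy for each ℓ = 1,…,n the equation ∏_{j=1}^n (ℓ − z_j(x))/(ℓ + z_j(x)) = (−1)^{n−ℓ} e^{−2ℓx}. Then they satisfy the linear relations ∑_{j=1}^n z_j′(x)/(ℓ² − z_j(x)²) = 1 for each ℓ = 1,…,n. -/

import Mathlib

open Finset

/-- differentiating the Bethe equations: if differentiable functions
`z_1,…,z_n` on an open interval are pairwise distinct with pairwise distinct squares,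
avoid `±1,…,±n`, and satisfy `∏_j (ℓ − z_j(x))/(ℓ + z_j(x)) = (−1)^{n−ℓ} e^{−2ℓx}`
for `ℓ = 1,…,n`, then `∑_j z_j′(x)/(ℓ² − z_j(x)²) = 1` for each `ℓ = 1,…,n`. -/
theorem stmt10 (n : ℕ) (a b : ℝ) (hab : a < b) (z : Fin n → ℝ → ℝ)
    (hdiff : ∀ j : Fin n, ∀ x ∈ Set.Ioo a b, DifferentiableAt ℝ (z j) x)
    (hdist : ∀ x ∈ Set.Ioo a b, ∀ j k : Fin n, j ≠ k → z j x ≠ z k x)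
    (hdistsq : ∀ x ∈ Set.Ioo a b, ∀ j k : Fin n, j ≠ k → (z j x) ^ 2 ≠ (z k x) ^ 2)
    (havoid : ∀ x ∈ Set.Ioo a b, ∀ j : Fin n, ∀ ℓ ∈ Finset.Icc 1 n,
      z j x ≠ (ℓ : ℝ) ∧ z j x ≠ -(ℓ : ℝ))
    (hbethe : ∀ x ∈ Set.Ioo a b, ∀ ℓ ∈ Finset.Icc 1 n,
      ∏ j, ((ℓ : ℝ) - z j x) / ((ℓ : ℝ) + z j x)
        = (-1) ^ (n - ℓ) * Real.exp (-2 * ℓ * x)) :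
    ∀ x ∈ Set.Ioo a b, ∀ ℓ ∈ Finset.Icc 1 n,
      ∑ j, deriv (z j) x / ((ℓ : ℝ) ^ 2 - (z j x) ^ 2) = 1 := by
  intro x hx ℓ hℓ
  set L : ℝ := (ℓ : ℝ) with hLdef
  have hL1 : 1 ≤ ℓ := (Finset.mem_Icc.mp hℓ).1
  have hLpos : (0:ℝ) < L := by
    have h1 : (1:ℝ) ≤ L := by rw [hLdef]; exact_mod_cast hL1
    linarith
  have hLne : L ≠ 0 := ne_of_gt hLpos
  -- nonvanishing of numerators and denominators
  have hminus : ∀ j : Fin n, L - z j x ≠ 0 := fun j =>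
    sub_ne_zero.mpr (Ne.symm (havoid x hx j ℓ hℓ).1)
  have hplus : ∀ j : Fin n, L + z j x ≠ 0 := by
    intro j h
    exact (havoid x hx j ℓ hℓ).2 (by linarith)
  have hsq : ∀ j : Fin n, L ^ 2 - (z j x) ^ 2 ≠ 0 := by
    intro j
    have : L ^ 2 - (z j x) ^ 2 = (L - z j x) * (L + z j x) := by ring
    rw [this]
    exact mul_ne_zero (hminus j) (hplus j)
  -- derivatives of the factors
  set g : Fin n → ℝ → ℝ := fun j t => (L - z j t) / (L + z j t) with hg
  set d : Fin n → ℝ := fun j =>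
    ((-(deriv (z j) x)) * (L + z j x) - (L - z j x) * deriv (z j) x) / (L + z j x) ^ 2
    with hd
  have hgd : ∀ j : Fin n, HasDerivAt (g j) (d j) x := by
    intro j
    have hz : HasDerivAt (z j) (deriv (z j) x) x := (hdiff j x hx).hasDerivAt
    exact (hz.const_sub L).div (hz.const_add L) (hplus j)
  have hprod : HasDerivAt (∏ j, g j ·)
      (∑ j, (∏ k ∈ Finset.univ.erase j, g k x) • d j) x :=
    HasDerivAt.fun_finsetProd (fun j _ => hgd j)
  -- the right-hand side
  set C : ℝ := (-1 : ℝ) ^ (n - ℓ) with hC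
  have hrhs : HasDerivAt (fun t => C * Real.exp (-2 * L * t))
      (C * (Real.exp (-2 * L * x) * (-2 * L))) x := by
    have h1 : HasDerivAt (fun t : ℝ => -2 * L * t) (-2 * L) x := by
      simpa using (hasDerivAt_id x).const_mul (-2 * L)
    exact (h1.exp.const_mul C)
  -- the two functions agree near x
  have heq : (fun t => ∏ j, g j t) =ᶠ[nhds x] (fun t => C * Real.exp (-2 * L * t)) := by
    filter_upwards [isOpen_Ioo.mem_nhds hx] with t ht
    exact hbethe t ht ℓ hℓ
  have hprod' : HasDerivAt (∏ j, g j ·) (C * (Real.exp (-2 * L * x) * (-2 * L))) x :=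
    hrhs.congr_of_eventuallyEq heq
  have hDeq : (∑ j, (∏ k ∈ Finset.univ.erase j, g k x) • d j)
      = C * (Real.exp (-2 * L * x) * (-2 * L)) := hprod.unique hprod'
  -- the product value
  set P : ℝ := ∏ j, g j x with hP
  have hgne : ∀ j : Fin n, g j x ≠ 0 := fun j =>
    div_ne_zero (hminus j) (hplus j)
  have hPne : P ≠ 0 := Finset.prod_ne_zero_iff.mpr (fun j _ => hgne j)
  have hPval : P = C * Real.exp (-2 * L * x) := hbethe x hx ℓ hℓ
  -- rewrite each term
  have hterm : ∀ j : Fin n, (∏ k ∈ Finset.univ.erase j, g k x) • d j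
      = (-2 * L) * P * (deriv (z j) x / (L ^ 2 - (z j x) ^ 2)) := by
    intro j
    have herase : (∏ k ∈ Finset.univ.erase j, g k x) = P / g j x := by
      rw [eq_div_iff (hgne j), mul_comm]
      exact Finset.mul_prod_erase Finset.univ (fun k => g k x) (Finset.mem_univ j)
    have hgx : P / g j x = P * (L + z j x) / (L - z j x) := by
      rw [hg]
      field_simp
    rw [herase, smul_eq_mul, hgx, hd]
    rw [div_mul_div_comm, ← mul_div_assoc,
      div_eq_div_iff (mul_ne_zero (hminus j) (pow_ne_zero 2 (hplus j))) (hsq j)]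
    ring
  rw [Finset.sum_congr rfl (fun j _ => hterm j), ← Finset.mul_sum, hPval] at hDeq
  have hexp := Real.exp_ne_zero (-2 * L * x)
  have hCne : C ≠ 0 := by
    rw [hC]; positivity
  have h2L : (-2 * L) ≠ 0 := by
    intro h; apply hLne; linarith
  have hK : (-2 * L) * (C * Real.exp (-2 * L * x)) ≠ 0 :=
    mul_ne_zero h2L (mul_ne_zero hCne hexp)
  refine mul_left_cancel₀ hK ?_
  rw [mul_one, hDeq]
  ring
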